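/- Let q ∈ Δ, let A be an n × m real matrix, b ∈ ℝᵐ, and fix λ ∈ ℝᵐ. Define the Lagrangian L(p) = D_f(p, q) + ⟨Aᵀp − b, λ⟩ for p ∈ cl(Δ). If p_λ ∈ Δ satisfies ∇f(p_λ) = ∇f(q) − Aλ, then p_λ is the unique global minimizer of L over cl(Δ). -/

import Mathlib

open scoped RealInnerProductSpace

lemma grad_ineq {n : ℕ} {Δ : Set (EuclideanSpace ℝ (Fin n))} (hopen : IsOpen Δ)
    (hconv : Convex ℝ Δ) {f : EuclideanSpace ℝ (Fin n) → ℝ}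
    (hsc : StrictConvexOn ℝ (closure Δ) f) (hdiff : DifferentiableOn ℝ f Δ)
    {x y : EuclideanSpace ℝ (Fin n)} (hx : x ∈ Δ) (hy : y ∈ closure Δ) (hne : y ≠ x) :
    f x + ⟪gradient f x, y - x⟫ < f y := by
  have hcc : Convex ℝ (closure Δ) := hconv.closure
  have hxc : x ∈ closure Δ := subset_closure hx
  set v := y - x with hv
  have hvne : v ≠ 0 := sub_ne_zero.mpr hne
  set φ : ℝ → EuclideanSpace ℝ (Fin n) := fun t => x + t • v with hφdef
  have hφmem : ∀ t ∈ Set.Icc (0:ℝ) 1, φ t ∈ closure Δ := by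
    intro t ht
    have : φ t = (1 - t) • x + t • y := by
      simp only [hφdef, hv]; module
    rw [this]
    exact hcc hxc hy (by linarith [ht.2]) ht.1 (by ring)
  have hφinj : ∀ a b : ℝ, a ≠ b → φ a ≠ φ b := by
    intro a b hab h
    apply hab
    have := congrArg (fun z => z - x) h
    simp only [hφdef, add_sub_cancel_left] at this
    have := sub_eq_zero.mpr this
    rw [← sub_smul] at this
    rcases smul_eq_zero.mp this with h1 | h1
    · linarith [sub_eq_zero.mp (by exact_mod_cast h1)]
    · exact absurd h1 hvne
  set g : ℝ → ℝ := fun t => f (φ t) with hgdef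
  have hgsc : StrictConvexOn ℝ (Set.Icc (0:ℝ) 1) g := by
    refine ⟨convex_Icc 0 1, ?_⟩
    intro a ha b hb hab s t hs ht hst
    have hcomb : s • φ a + t • φ b = φ (s * a + t * b) := by
      simp only [hφdef]
      have h2 : s • (x + a • v) + t • (x + b • v) = (s + t) • x + (s * a + t * b) • v := by
        module
      rw [h2, hst, one_smul]
    calc g (s * a + t * b) = f (s • φ a + t • φ b) := by rw [hcomb]
      _ < s * f (φ a) + t * f (φ b) :=
        hsc.2 (hφmem a ha) (hφmem b hb) (hφinj a b hab) hs ht hst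
  have hgx : HasGradientAt f (gradient f x) x :=
    (hdiff.differentiableAt (hopen.mem_nhds hx)).hasGradientAt
  have hfd : HasFDerivAt f ((InnerProductSpace.toDual ℝ _) (gradient f x)) x :=
    hasGradientAt_iff_hasFDerivAt.mp hgx
  have hφ0 : φ 0 = x := by simp [hφdef]
  rw [← hφ0] at hfd
  have hφd : HasDerivAt φ v 0 := by
    have := ((hasDerivAt_id (0:ℝ)).smul_const v).const_add x
    rw [one_smul] at this
    exact this
  have hg0 : HasDerivAt g ⟪gradient f x, v⟫ 0 := by
    have h := hfd.comp_hasDerivAt 0 hφd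
    rw [hφ0] at h
    have he : (InnerProductSpace.toDual ℝ (EuclideanSpace ℝ (Fin n))) (gradient f x) v
        = ⟪gradient f x, v⟫ := InnerProductSpace.toDual_apply_apply
    rw [he] at h
    exact h
  have hslope := hgsc.lt_slope_of_hasDerivAt (Set.left_mem_Icc.mpr zero_le_one)
    (Set.right_mem_Icc.mpr zero_le_one) one_pos hg0
  have h1 : g 1 = f y := by simp [hgdef, hφdef, hv]
  have h0 : g 0 = f x := by simp [hgdef, hφdef]
  rw [slope_def_field, h0, h1] at hslope
  have : ⟪gradient f x, v⟫ < f y - f x := by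
    calc ⟪gradient f x, v⟫ < (f y - f x) / (1 - 0) := hslope
      _ = f y - f x := by ring
  linarith

/-- For fixed `q ∈ Δ` and `λ ∈ ℝᵐ`, define the Lagrangian
`L(p) = D_f(p, q) + ⟪Aᵀp − b, λ⟫` on `cl(Δ)`. If `p_λ ∈ Δ` satisfies
`∇f(p_λ) = ∇f(q) − Aλ`, then `p_λ` is the unique global minimizer of `L` over `cl(Δ)`. -/
theorem lagrangian_unique_global_min {n m : ℕ} {Δ : Set (EuclideanSpace ℝ (Fin n))}
    (hne : Δ.Nonempty) (hopen : IsOpen Δ) (hconv : Convex ℝ Δ)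
    {f : EuclideanSpace ℝ (Fin n) → ℝ}
    (hcont : ContinuousOn f (closure Δ))
    (hdiff : DifferentiableOn ℝ f Δ)
    (hsc : StrictConvexOn ℝ (closure Δ) f)
    {D : EuclideanSpace ℝ (Fin n) → EuclideanSpace ℝ (Fin n) → ℝ}
    (hD : ∀ p q, D p q = f p - f q - ⟪gradient f q, p - q⟫)
    {q : EuclideanSpace ℝ (Fin n)} (hq : q ∈ Δ)
    (A : Matrix (Fin n) (Fin m) ℝ) (b lam : Fin m → ℝ)
    (L : EuclideanSpace ℝ (Fin n) → ℝ)
    (hL : ∀ p, L p = D p q + ∑ j, (∑ i, A i j * p i - b j) * lam j)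
    {plam : EuclideanSpace ℝ (Fin n)} (hplam : plam ∈ Δ)
    (hgrad : ∀ i, gradient f plam i = gradient f q i - ∑ j, A i j * lam j) :
    (∀ p ∈ closure Δ, L plam ≤ L p) ∧
      ∀ p ∈ closure Δ, p ≠ plam → L plam < L p := by
  have key : ∀ p, L p = L plam + (f p - f plam - ⟪gradient f plam, p - plam⟫) := by
    intro p
    have hinner : ∀ (u w : EuclideanSpace ℝ (Fin n)), ⟪u, w⟫ = ∑ i, u i * w i := by
      intro u w; simp [PiLp.inner_apply, RCLike.inner_apply]; exact Finset.sum_congr rfl fun i _ => mul_comm _ _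
    have hswap : ∀ (u : EuclideanSpace ℝ (Fin n)),
        ∑ j, (∑ i, A i j * u i) * lam j = ∑ i, (∑ j, A i j * lam j) * u i := by
      intro u
      simp_rw [Finset.sum_mul]
      rw [Finset.sum_comm]
      refine Finset.sum_congr rfl fun i _ => Finset.sum_congr rfl fun j _ => by ring
    rw [hL, hL, hD, hD, hinner, hinner, hinner]
    simp only [PiLp.sub_apply, hgrad, sub_mul, Finset.sum_sub_distrib]
    rw [hswap p, hswap plam]
    simp only [sub_mul, mul_sub, Finset.sum_sub_distrib]
    ring
  have strict : ∀ p ∈ closure Δ, p ≠ plam → L plam < L p := by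
    intro p hp hpne
    have h := grad_ineq hopen hconv hsc hdiff hplam hp hpne
    rw [key p]
    linarith
  refine ⟨fun p hp => ?_, strict⟩
  by_cases hpe : p = plam
  · rw [hpe]
  · exact (strict p hp hpe).le
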